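/- Let w_{n,k} denote the number of words of length n over {1,…,n} avoiding a strictly decreasing subsequence of length k+1, and let Av_n(k+1,…,1) denote the set of permutations of {1,…,n} avoiding the decreasing pattern of length k+1. Then w_{n,k} ≤ binomial(2n-1, n) · |Av_n(k+1, k, …, 1)|. -/

import Mathlib

/-- `wDec n k` is the number of words of length `n` over the alphabet `{1,…,n}` that avoid a
strictly decreasing subsequence of length `k+1`. -/
noncomputable def wDec (n k : ℕ) : ℕ :=
  Nat.card {w : Fin n → Fin n //
    ¬ ∃ s : Fin (k + 1) → Fin n, StrictMono s ∧
      ∀ i j : Fin (k + 1), i < j → w (s j) < w (s i)}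

/-- Lexicographic comparison property of `Tuple.sort`: the sorting permutation orders positions
by value first, then by position. -/
lemma sort_lex_lt {n : ℕ} (w : Fin n → Fin n) {a b : Fin n} (hab : a < b) :
    w (Tuple.sort w a) < w (Tuple.sort w b) ∨
      w (Tuple.sort w a) = w (Tuple.sort w b) ∧ Tuple.sort w a < Tuple.sort w b := by
  have h := (Tuple.graphEquiv₂ w).strictMono hab
  rw [Tuple.graphEquiv₂_apply, Tuple.graphEquiv₂_apply] at h
  have h' : (toLex (w (Tuple.sort w a), Tuple.sort w a) : (Fin n) ×ₗ (Fin n)) <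
      toLex (w (Tuple.sort w b), Tuple.sort w b) := h
  rw [Prod.Lex.lt_iff] at h'
  exact h'

/-- `wDec n k` is at most `binomial(2n-1, n)` times the number of permutations of `{1,…,n}`
avoiding the decreasing pattern `(k+1)k⋯1`. -/
theorem wDec_le_choose_mul_avoiders (n k : ℕ) :
    wDec n k ≤ Nat.choose (2 * n - 1) n *
      Nat.card {π : Equiv.Perm (Fin n) //
        ¬ ∃ s : Fin (k + 1) → Fin n, StrictMono s ∧
          ∀ i j : Fin (k + 1), i < j → π (s j) < π (s i)} := by
  classical
  set A := {π : Equiv.Perm (Fin n) //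
      ¬ ∃ s : Fin (k + 1) → Fin n, StrictMono s ∧
        ∀ i j : Fin (k + 1), i < j → π (s j) < π (s i)} with hA
  set S := {s : Finset (Fin (2 * n - 1)) // s.card = n} with hS
  -- the encoding of the sorted word as a strictly monotone function
  have hbound : ∀ (w : Fin n → Fin n) (i : Fin n),
      (w (Tuple.sort w i) : ℕ) + (i : ℕ) < 2 * n - 1 := by
    intro w i
    have h1 := (w (Tuple.sort w i)).isLt
    have h2 := i.isLt
    omega
  let enc : (Fin n → Fin n) → Fin n → Fin (2 * n - 1) := fun w i =>
    ⟨(w (Tuple.sort w i) : ℕ) + (i : ℕ), hbound w i⟩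
  have henc_mono : ∀ w : Fin n → Fin n, StrictMono (enc w) := by
    intro w i j hij
    have hm : w (Tuple.sort w i) ≤ w (Tuple.sort w j) :=
      Tuple.monotone_sort w (le_of_lt hij)
    have h1 : (w (Tuple.sort w i) : ℕ) ≤ (w (Tuple.sort w j) : ℕ) := hm
    have h2 : (i : ℕ) < (j : ℕ) := hij
    simp only [enc, Fin.mk_lt_mk]
    omega
  -- avoidance transfers from the word to its standardization
  have havoid : ∀ w : Fin n → Fin n,
      (¬ ∃ s : Fin (k + 1) → Fin n, StrictMono s ∧
        ∀ i j : Fin (k + 1), i < j → w (s j) < w (s i)) →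
      ¬ ∃ s : Fin (k + 1) → Fin n, StrictMono s ∧
        ∀ i j : Fin (k + 1), i < j → (Tuple.sort w)⁻¹ (s j) < (Tuple.sort w)⁻¹ (s i) := by
    intro w hw
    rintro ⟨s, hs, hdec⟩
    apply hw
    refine ⟨s, hs, fun i j hij => ?_⟩
    have hab : (Tuple.sort w)⁻¹ (s j) < (Tuple.sort w)⁻¹ (s i) := hdec i j hij
    have hcase := sort_lex_lt w hab
    rw [Equiv.Perm.coe_inv, Equiv.apply_symm_apply, Equiv.apply_symm_apply] at hcase
    rcases hcase with h | ⟨_, h⟩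
    · exact h
    · exact absurd h (not_lt.mpr (le_of_lt (hs hij)))
  -- the injection
  let F : {w : Fin n → Fin n //
      ¬ ∃ s : Fin (k + 1) → Fin n, StrictMono s ∧
        ∀ i j : Fin (k + 1), i < j → w (s j) < w (s i)} → S × A :=
    fun ⟨w, hw⟩ =>
      (⟨Finset.univ.image (enc w), by
          rw [Finset.card_image_of_injective _ (henc_mono w).injective, Finset.card_univ,
            Fintype.card_fin]⟩,
        ⟨(Tuple.sort w)⁻¹, havoid w hw⟩)
  have hinj : Function.Injective F := by
    rintro ⟨w, hw⟩ ⟨w', hw'⟩ heq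
    simp only [F, Prod.mk.injEq] at heq
    obtain ⟨hsets, hperm⟩ := heq
    have hsets2 : Finset.univ.image (enc w) = Finset.univ.image (enc w') :=
      congrArg Subtype.val hsets
    have hperm2 : (Tuple.sort w)⁻¹ = (Tuple.sort w')⁻¹ := congrArg Subtype.val hperm
    have hσ : Tuple.sort w = Tuple.sort w' := inv_injective hperm2
    -- the strictly monotone encodings agree
    have hmem : ∀ x, enc w x ∈ Finset.univ.image (enc w) := fun x =>
      Finset.mem_image_of_mem _ (Finset.mem_univ x)
    have hmem' : ∀ x, enc w' x ∈ Finset.univ.image (enc w) := fun x => by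
      rw [hsets2]; exact Finset.mem_image_of_mem _ (Finset.mem_univ x)
    have hcard : (Finset.univ.image (enc w)).card = n := by
      rw [Finset.card_image_of_injective _ (henc_mono w).injective, Finset.card_univ,
        Fintype.card_fin]
    have he1 := Finset.orderEmbOfFin_unique hcard hmem (henc_mono w)
    have he2 := Finset.orderEmbOfFin_unique hcard hmem' (henc_mono w')
    have henc_eq : enc w = enc w' := he1.trans he2.symm
    have hval : ∀ i, w (Tuple.sort w i) = w' (Tuple.sort w' i) := by
      intro i
      have := congrFun henc_eq i
      simp only [enc, Fin.mk.injEq] at this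
      exact Fin.ext (by omega)
    refine Subtype.ext (funext fun x => ?_)
    show w x = w' x
    have := hval ((Tuple.sort w)⁻¹ x)
    rw [Equiv.Perm.coe_inv, Equiv.apply_symm_apply] at this
    rw [← hσ, Equiv.apply_symm_apply] at this
    exact this
  have hcardS : Nat.card S = Nat.choose (2 * n - 1) n := by
    rw [Nat.card_eq_fintype_card]
    show Fintype.card {s : Finset (Fin (2 * n - 1)) // s.card = n} = _
    rw [Fintype.card_finset_len, Fintype.card_fin]
  calc wDec n k ≤ Nat.card (S × A) := Nat.card_le_card_of_injective F hinj
    _ = Nat.card S * Nat.card A := Nat.card_prod S A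
    _ = Nat.choose (2 * n - 1) n * Nat.card A := by rw [hcardS]
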